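/- Let w be as in condition (Ker.) with Laplace exponent φ(λ) = ∫₀^∞ (1 − e^{−λs})(−dw(s)), and define H(λ) = φ(λ) − λφ'(λ). Then there exist constants c₁, c₂ > 0 such that for every λ > 0, c₁ λ² ∫₀^{1/λ} s w(s) ds ≤ H(λ) ≤ c₂ λ² ∫₀^{1/λ} s w(s) ds. -/

import Mathlib

open MeasureTheory Real Set Filter ENNReal Topology

section helpers

lemma aux_mul_exp_le (c a : ℝ) (hc : 0 < c) (ha : 0 < a) :
    a * Real.exp (-(c*a)) ≤ max c⁻¹ 1 * min 1 a := by
  have hp2 := Real.exp_pos (-(c*a))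
  have h1 : a * Real.exp (-(c*a)) ≤ c⁻¹ := by
    have h := Real.add_one_le_exp (c*a)
    have h2 : c * a ≤ Real.exp (c*a) := by linarith
    have h3 : (c*a) * Real.exp (-(c*a)) ≤ Real.exp (c*a) * Real.exp (-(c*a)) :=
      mul_le_mul_of_nonneg_right h2 hp2.le
    have h4 : Real.exp (c*a) * Real.exp (-(c*a)) = 1 := by rw [← Real.exp_add]; simp
    rw [h4] at h3
    calc a * Real.exp (-(c*a)) = c⁻¹ * ((c*a) * Real.exp (-(c*a))) := by
          field_simp
      _ ≤ c⁻¹ * 1 := mul_le_mul_of_nonneg_left h3 (by positivity)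
      _ = c⁻¹ := mul_one _
  have hm1 : (1:ℝ) ≤ max c⁻¹ 1 := le_max_right _ _
  have hm2 : c⁻¹ ≤ max c⁻¹ 1 := le_max_left _ _
  rcases le_total a 1 with h | h
  · rw [min_eq_right h]
    have he1 : Real.exp (-(c*a)) ≤ 1 := Real.exp_le_one_iff.2 (by nlinarith)
    calc a * Real.exp (-(c*a)) ≤ a * 1 := mul_le_mul_of_nonneg_left he1 ha.le
      _ = 1 * a := by ring
      _ ≤ max c⁻¹ 1 * a := mul_le_mul_of_nonneg_right hm1 ha.le
  · rw [min_eq_left h]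
    calc a * Real.exp (-(c*a)) ≤ c⁻¹ := h1
      _ ≤ max c⁻¹ 1 := hm2
      _ = max c⁻¹ 1 * 1 := (mul_one _).symm

lemma aux_one_sub_exp_le (c a : ℝ) (hc : 0 < c) (ha : 0 < a) :
    1 - Real.exp (-(c*a)) ≤ max c 1 * min 1 a := by
  have hp2 := Real.exp_pos (-(c*a))
  have h := Real.add_one_le_exp (-(c*a))
  rcases le_total a 1 with h1 | h1
  · rw [min_eq_right h1]
    have : 1 - Real.exp (-(c*a)) ≤ c * a := by linarith
    calc 1 - Real.exp (-(c*a)) ≤ c * a := this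
      _ ≤ max c 1 * a := mul_le_mul_of_nonneg_right (le_max_left _ _) ha.le
  · rw [min_eq_left h1]
    have : 1 - Real.exp (-(c*a)) ≤ 1 := by linarith
    calc 1 - Real.exp (-(c*a)) ≤ 1 := this
      _ ≤ max c 1 := le_max_right _ _
      _ = max c 1 * 1 := (mul_one _).symm

lemma aux_min_sq_le (c a : ℝ) (hc : 0 < c) (ha : 0 < a) :
    (min (c*a) 1)^2 ≤ max c 1 * min 1 a := by
  have h0 : 0 ≤ min (c*a) 1 := le_min (by positivity) zero_le_one
  have h1 : min (c*a) 1 ≤ 1 := min_le_right _ _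
  have hsq : (min (c*a) 1)^2 ≤ min (c*a) 1 := by nlinarith
  refine hsq.trans ?_
  rcases le_total a 1 with h2 | h2
  · rw [min_eq_right h2]
    calc min (c*a) 1 ≤ c * a := min_le_left _ _
      _ ≤ max c 1 * a := mul_le_mul_of_nonneg_right (le_max_left _ _) ha.le
  · rw [min_eq_left h2]
    calc min (c*a) 1 ≤ 1 := h1
      _ ≤ max c 1 := le_max_right _ _
      _ = max c 1 * 1 := (mul_one _).symm

end helpers

lemma aux_exp_quad (x : ℝ) (hx : 0 ≤ x) : 1 + x + x^2/4 ≤ Real.exp x := by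
  have h := Real.add_one_le_exp (x/2)
  have hsq : Real.exp (x/2) * Real.exp (x/2) = Real.exp x := by
    rw [← Real.exp_add]; ring_nf
  nlinarith [Real.exp_pos (x/2)]

lemma aux_g_le (x : ℝ) (hx : 0 ≤ x) :
    1 - Real.exp (-x) - x * Real.exp (-x) ≤ (min x 1)^2 := by
  rcases le_total x 1 with h | h
  · rw [min_eq_left h]
    have h1 := Real.add_one_le_exp (-x)
    have h2 := Real.exp_pos (-x)
    nlinarith
  · rw [min_eq_right h]
    have h2 := (Real.exp_pos (-x)).le
    nlinarith

lemma aux_g_ge (x : ℝ) (hx : 0 ≤ x) :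
    (min x 1)^2 / (4 * Real.exp 1) ≤ 1 - Real.exp (-x) - x * Real.exp (-x) := by
  have he1 : (2.7182818283 : ℝ) < Real.exp 1 := Real.exp_one_gt_d9
  have he : (0:ℝ) < Real.exp 1 := Real.exp_pos 1
  have hE := Real.exp_pos x
  have hen := Real.exp_pos (-x)
  have hmul : Real.exp (-x) * Real.exp x = 1 := by
    rw [← Real.exp_add]; simp
  have key : 1 - Real.exp (-x) - x * Real.exp (-x)
      = (Real.exp x - (1+x)) * Real.exp (-x) := by linear_combination -hmul
  rcases le_total x 1 with h | h
  · rw [min_eq_left h]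
    have hq := aux_exp_quad x hx
    have hEe : Real.exp x ≤ Real.exp 1 := Real.exp_le_exp.2 h
    have h3 : 1 ≤ Real.exp (-x) * Real.exp 1 := by
      calc (1:ℝ) = Real.exp (-x) * Real.exp x := hmul.symm
      _ ≤ _ := by exact mul_le_mul_of_nonneg_left hEe hen.le
    have hga : (x^2/4) * Real.exp (-x) ≤ 1 - Real.exp (-x) - x * Real.exp (-x) := by
      rw [key]
      exact mul_le_mul_of_nonneg_right (by linarith) hen.le
    rw [div_le_iff₀ (by positivity)]
    nlinarith [sq_nonneg x]
  · rw [min_eq_right h]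
    have h2 : 1 + x ≤ 2 * Real.exp (x - 1) := by
      have := Real.add_one_le_exp (x - 1)
      linarith
    have hsub : Real.exp (x - 1) * Real.exp 1 = Real.exp x := by
      rw [← Real.exp_add]; ring_nf
    have hxe : Real.exp (x - 1) * Real.exp (-x) = Real.exp (-1) := by
      rw [← Real.exp_add]; ring_nf
    have hem : Real.exp (-1) * Real.exp 1 = 1 := by rw [← Real.exp_add]; simp
    have hx1 := Real.exp_pos (x-1)
    have hg : (Real.exp 1 - 2) * Real.exp (-1) ≤ 1 - Real.exp (-x) - x * Real.exp (-x) := by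
      rw [key]
      have : (Real.exp 1 - 2) * Real.exp (x-1) ≤ Real.exp x - (1+x) := by nlinarith
      calc (Real.exp 1 - 2) * Real.exp (-1)
          = ((Real.exp 1 - 2) * Real.exp (x-1)) * Real.exp (-x) := by rw [mul_assoc, hxe]
        _ ≤ _ := mul_le_mul_of_nonneg_right this hen.le
    rw [div_le_iff₀ (by positivity)]
    have hempos := Real.exp_pos (-1)
    nlinarith [hg, hem]

lemma lint_Ioc_id (c : ℝ) (hc : 0 ≤ c) :
    ∫⁻ s in Ioc (0:ℝ) c, ENNReal.ofReal s = ENNReal.ofReal (c^2/2) := by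
  rw [← ofReal_integral_eq_lintegral_ofReal]
  · congr 1
    rw [← intervalIntegral.integral_of_le hc, integral_id]; ring
  · exact (intervalIntegral.intervalIntegrable_id (μ := volume) (a := 0) (b := c)).1
  · refine (ae_restrict_iff' measurableSet_Ioc).2 (Eventually.of_forall fun s hs => hs.1.le)

lemma fubini_key (μ : Measure ℝ) (hsf : SigmaFinite μ) (hμ0 : μ (Iic 0) = 0) (b : ℝ) (hb : 0 < b) :
    ∫⁻ s in Ioc (0:ℝ) b, ENNReal.ofReal s * μ (Ioi s)
      = ∫⁻ u, ENNReal.ofReal ((min b u)^2/2) ∂μ := by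
  haveI := hsf
  set f : ℝ → ℝ → ℝ≥0∞ := fun s u => if s < u then ENNReal.ofReal s else 0 with hf
  have hum : Measurable (Function.uncurry f) := by
    apply Measurable.ite (measurableSet_lt measurable_fst measurable_snd)
    · exact ENNReal.measurable_ofReal.comp measurable_fst
    · exact measurable_const
  have step1 : ∀ s : ℝ, ∫⁻ u, f s u ∂μ = ENNReal.ofReal s * μ (Ioi s) := by
    intro s
    have : ∀ u, f s u = (Ioi s).indicator (fun _ => ENNReal.ofReal s) u := by
      intro u
      simp only [hf, indicator, mem_Ioi]
    simp_rw [this]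
    rw [lintegral_indicator measurableSet_Ioi, setLIntegral_const]
  have hae : ∀ᵐ u ∂μ, 0 < u := by
    rw [ae_iff]; simp only [not_lt]; exact hμ0
  have step2 : ∀ u : ℝ, 0 < u →
      (∫⁻ s in Ioc (0:ℝ) b, f s u) = ENNReal.ofReal ((min b u)^2/2) := by
    intro u hu
    have hind : ∀ s, f s u = (Iio u).indicator (fun s => ENNReal.ofReal s) s := by
      intro s; simp only [hf, indicator, mem_Iio]
    simp_rw [hind]
    rw [lintegral_indicator measurableSet_Iio, Measure.restrict_restrict measurableSet_Iio]
    have hset : (Iio u ∩ Ioc (0:ℝ) b : Set ℝ) =ᵐ[volume] (Ioc (0:ℝ) (min b u) : Set ℝ) := by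
      rw [MeasureTheory.ae_eq_set]
      constructor
      · refine measure_mono_null (fun s hs => ?_) (measure_empty (μ := volume))
        rcases hs with ⟨⟨hs1, hs2, hs3⟩, hs4⟩
        exact hs4 ⟨hs2, le_min hs3 hs1.le⟩
      · refine measure_mono_null (fun s hs => ?_) (volume_singleton (a := u))
        rcases hs with ⟨⟨hs1, hs2⟩, hs3⟩
        have hub : s ∈ Ioc (0:ℝ) b := ⟨hs1, hs2.trans (min_le_left _ _)⟩
        have hnlt : ¬ s < u := fun hlt => hs3 ⟨hlt, hub⟩
        have : s = u := le_antisymm (hs2.trans (min_le_right _ _)) (not_lt.1 hnlt)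
        simp [this]
    rw [setLIntegral_congr hset]
    exact lint_Ioc_id _ (le_min hb.le hu.le)
  calc ∫⁻ s in Ioc (0:ℝ) b, ENNReal.ofReal s * μ (Ioi s)
      = ∫⁻ s in Ioc (0:ℝ) b, ∫⁻ u, f s u ∂μ := by
        refine (setLIntegral_congr_fun measurableSet_Ioc (fun s _ => ?_)).symm
        exact step1 s
    _ = ∫⁻ u, (∫⁻ s in Ioc (0:ℝ) b, f s u) ∂μ := lintegral_lintegral_swap hum.aemeasurable
    _ = ∫⁻ u, ENNReal.ofReal ((min b u)^2/2) ∂μ := by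
        refine lintegral_congr_ae (hae.mono fun u hu => step2 u hu)
/-- Under condition (Ker.), `H(λ) = φ(λ) - λ φ'(λ)` is comparable to
`λ² ∫₀^{1/λ} s w(s) ds`. -/
theorem H_comparable_to_weighted_tail_integral
    (w φ H : ℝ → ℝ) (μ : Measure ℝ)
    (hw_nonneg : ∀ s, 0 < s → 0 ≤ w s)
    (hw_anti : ∀ s t, 0 < s → s ≤ t → w t ≤ w s)
    (hw_rc : ∀ s, 0 < s → Tendsto w (nhdsWithin s (Ioi s)) (nhds (w s)))
    (hw_zero : Tendsto w (nhdsWithin 0 (Ioi 0)) atTop)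
    (hw_infty : Tendsto w atTop (nhds 0))
    (hμ_supp : μ (Iic 0) = 0)
    (hμ_tail : ∀ a b, 0 < a → a ≤ b → μ (Ioc a b) = ENNReal.ofReal (w a - w b))
    (hμ_int : ∫⁻ s, ENNReal.ofReal (min 1 s) ∂μ < ⊤)
    (hφ : ∀ l, 0 ≤ l → φ l = ∫ s, (1 - Real.exp (-l * s)) ∂μ)
    (hH : ∀ l, 0 < l → H l = φ l - l * deriv φ l) :
    ∃ c₁ c₂ : ℝ, 0 < c₁ ∧ 0 < c₂ ∧ ∀ l, 0 < l →
      c₁ * (l ^ 2 * ∫ s in Ioc (0:ℝ) l⁻¹, s * w s) ≤ H l ∧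
      H l ≤ c₂ * (l ^ 2 * ∫ s in Ioc (0:ℝ) l⁻¹, s * w s) := by
  -- a.e. positivity
  have hae : ∀ᵐ u ∂μ, 0 < u := by
    rw [ae_iff]; simp only [not_lt]; exact hμ_supp
  -- tail identity
  have htail : ∀ a : ℝ, 0 < a → μ (Ioi a) = ENNReal.ofReal (w a) := by
    intro a ha
    have hmono : Monotone (fun n : ℕ => Ioc a (a + n)) := by
      intro m n hmn
      exact Ioc_subset_Ioc le_rfl (by simp only [add_le_add_iff_left, Nat.cast_le]; exact hmn)
    have hunion : ⋃ n : ℕ, Ioc a (a + n) = Ioi a := by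
      ext x
      simp only [mem_iUnion, mem_Ioc, mem_Ioi]
      constructor
      · rintro ⟨n, h1, _⟩; exact h1
      · intro hx
        obtain ⟨n, hn⟩ := exists_nat_ge (x - a)
        exact ⟨n, hx, by linarith⟩
    have h1 : Tendsto (fun n : ℕ => μ (Ioc a (a + n))) atTop (𝓝 (μ (Ioi a))) := by
      have := tendsto_measure_iUnion_atTop (μ := μ) hmono
      rw [hunion] at this
      exact this
    have h2 : Tendsto (fun n : ℕ => μ (Ioc a (a + n))) atTop (𝓝 (ENNReal.ofReal (w a))) := by
      have heq : ∀ n : ℕ, μ (Ioc a (a + n)) = ENNReal.ofReal (w a - w (a + n)) :=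
        fun n => hμ_tail a (a + n) ha (by linarith [Nat.cast_nonneg (α := ℝ) n])
      simp_rw [heq]
      have ht1 : Tendsto (fun n : ℕ => w (a + n)) atTop (𝓝 0) :=
        hw_infty.comp (tendsto_atTop_add_const_left atTop a tendsto_natCast_atTop_atTop)
      have ht2 : Tendsto (fun n : ℕ => w a - w (a + n)) atTop (𝓝 (w a)) := by
        have := tendsto_const_nhds (x := w a) (f := atTop (α := ℕ)) |>.sub ht1
        simpa using this
      exact (ENNReal.continuous_ofReal.continuousAt.tendsto.comp ht2)
    exact tendsto_nhds_unique h1 h2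
  -- sigma-finiteness
  have hsf : SigmaFinite μ := by
    refine ⟨⟨⟨fun n => Iic 0 ∪ Ioi ((n:ℝ)+1)⁻¹, fun _ => trivial, ?_, ?_⟩⟩⟩
    · intro n
      have hpos : (0:ℝ) < ((n:ℝ)+1)⁻¹ := by positivity
      calc μ (Iic 0 ∪ Ioi ((n:ℝ)+1)⁻¹) ≤ μ (Iic 0) + μ (Ioi ((n:ℝ)+1)⁻¹) := measure_union_le _ _
        _ = ENNReal.ofReal (w (((n:ℝ)+1)⁻¹)) := by rw [hμ_supp, htail _ hpos, zero_add]
        _ < ⊤ := ENNReal.ofReal_lt_top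
    · ext x
      simp only [mem_iUnion, mem_union, mem_Iic, mem_Ioi, mem_univ, iff_true]
      rcases le_or_gt x 0 with hx | hx
      · exact ⟨0, Or.inl hx⟩
      · obtain ⟨n, hn⟩ := exists_nat_gt x⁻¹
        refine ⟨n, Or.inr ?_⟩
        have h1 : x⁻¹ < (n:ℝ)+1 := hn.trans (lt_add_one _)
        have := inv_lt_of_inv_lt₀ hx h1
        exact this
  haveI := hsf
  -- integrability criterion
  have key_int : ∀ (f : ℝ → ℝ) (C : ℝ), 0 ≤ C → AEStronglyMeasurable f μ →
      (∀ᵐ u ∂μ, ‖f u‖ ≤ C * min 1 u) → Integrable f μ := by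
    intro f C hC hm hb
    refine ⟨hm, ?_⟩
    rw [hasFiniteIntegral_iff_norm]
    calc ∫⁻ a, ENNReal.ofReal ‖f a‖ ∂μ
        ≤ ∫⁻ a, ENNReal.ofReal C * ENNReal.ofReal (min 1 a) ∂μ := by
          refine lintegral_mono_ae (hb.mono fun a ha => ?_)
          rw [← ENNReal.ofReal_mul hC]
          exact ENNReal.ofReal_le_ofReal ha
      _ = ENNReal.ofReal C * ∫⁻ a, ENNReal.ofReal (min 1 a) ∂μ :=
          lintegral_const_mul' _ _ ENNReal.ofReal_ne_top
      _ < ⊤ := ENNReal.mul_lt_top ENNReal.ofReal_lt_top hμ_int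
  -- integrability of the two basic integrands
  have int1 : ∀ l : ℝ, 0 < l → Integrable (fun a => 1 - Real.exp (-l*a)) μ := by
    intro l hl
    refine key_int _ (max l 1) (by positivity) ?_ ?_
    · exact (Continuous.aestronglyMeasurable (by fun_prop))
    · refine hae.mono fun a ha => ?_
      have h1 := aux_one_sub_exp_le l a hl ha
      have h2 := Real.exp_pos (-(l*a))
      have h3 : Real.exp (-(l*a)) ≤ 1 := Real.exp_le_one_iff.2 (by nlinarith)
      have hgoal : ‖1 - Real.exp (-l*a)‖ = 1 - Real.exp (-(l*a)) := by
        rw [neg_mul, Real.norm_eq_abs, abs_of_nonneg (by linarith)]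
      rw [hgoal]
      exact h1
  have int2 : ∀ l : ℝ, 0 < l → Integrable (fun a => a * Real.exp (-l*a)) μ := by
    intro l hl
    refine key_int _ (max l⁻¹ 1) (by positivity) ?_ ?_
    · exact (Continuous.aestronglyMeasurable (by fun_prop))
    · refine hae.mono fun a ha => ?_
      have h1 := aux_mul_exp_le l a hl ha
      have h2 := Real.exp_pos (-(l*a))
      rw [Real.norm_eq_abs, abs_of_nonneg (by positivity), neg_mul]
      exact h1
  -- derivative of φ
  have hderiv : ∀ l : ℝ, 0 < l →
      HasDerivAt (fun x => ∫ a, (1 - Real.exp (-x*a)) ∂μ) (∫ a, a * Real.exp (-l*a) ∂μ) l := by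
    intro l hl
    have hl2 : 0 < l/2 := by linarith
    have main := hasDerivAt_integral_of_dominated_loc_of_deriv_le (μ := μ)
      (F := fun x a => 1 - Real.exp (-x*a)) (F' := fun x a => a * Real.exp (-x*a))
      (x₀ := l) (s := Metric.ball l (l/2)) (bound := fun a => max (l/2)⁻¹ 1 * min 1 a) (Metric.ball_mem_nhds l hl2)
      ?_ ?_ ?_ ?_ ?_ ?_
    · exact main.2
    · exact Eventually.of_forall fun x => (Continuous.aestronglyMeasurable (by fun_prop))
    · exact int1 l hl
    · exact (Continuous.aestronglyMeasurable (by fun_prop))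
    · refine hae.mono fun a ha x hx => ?_
      have hxl : l/2 < x := by
        rw [Metric.mem_ball, Real.dist_eq, abs_lt] at hx
        linarith [hx.1]
      have hmono : Real.exp (-x*a) ≤ Real.exp (-(l/2)*a) := by
        apply Real.exp_le_exp.2
        nlinarith
      have h1 := aux_mul_exp_le (l/2) a hl2 ha
      rw [Real.norm_eq_abs, abs_of_nonneg (by positivity)]
      calc a * Real.exp (-x*a) ≤ a * Real.exp (-(l/2)*a) :=
            mul_le_mul_of_nonneg_left hmono ha.le
        _ ≤ max (l/2)⁻¹ 1 * min 1 a := by rw [neg_mul]; exact h1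
    · refine key_int _ (max (l/2)⁻¹ 1) (by positivity) ?_ ?_
      · exact (Continuous.aestronglyMeasurable (by fun_prop))
      · refine hae.mono fun a ha => ?_
        rw [Real.norm_eq_abs, abs_of_nonneg (by positivity)]
    · refine hae.mono fun a ha x _ => ?_
      have h1 : HasDerivAt (fun x : ℝ => -x*a) (-a) x := by
        simpa using ((hasDerivAt_id x).neg.mul_const a)
      have h2 := h1.exp
      have h3 := (hasDerivAt_const x (1:ℝ)).sub h2
      convert h3 using 1
      · funext y; simp only [Pi.sub_apply]
      · ring
  -- formula for H
  have hHeq : ∀ l : ℝ, 0 < l →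
      H l = ∫ a, (1 - Real.exp (-l*a) - l * (a * Real.exp (-l*a))) ∂μ := by
    intro l hl
    have hev : φ =ᶠ[nhds l] fun x => ∫ a, (1 - Real.exp (-x*a)) ∂μ := by
      filter_upwards [eventually_gt_nhds hl] with x hx
      exact hφ x hx.le
    have hd : HasDerivAt φ (∫ a, a * Real.exp (-l*a) ∂μ) l :=
      (hderiv l hl).congr_of_eventuallyEq hev
    rw [hH l hl, hφ l hl.le, hd.deriv, ← integral_const_mul,
      ← integral_sub (int1 l hl) ((int2 l hl).const_mul l)]
  -- main estimates
  refine ⟨1/(2 * Real.exp 1), 2, by positivity, by norm_num, ?_⟩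
  intro l hl
  set b : ℝ := l⁻¹ with hb
  have hbpos : 0 < b := by positivity
  -- measurability of the tail version of w
  have htail_meas : Measurable fun s : ℝ => (μ (Ioi s)).toReal := by
    apply ENNReal.measurable_toReal.comp
    apply Antitone.measurable
    intro s t hst
    exact measure_mono (Ioi_subset_Ioi hst)
  have hw_ae : (fun s : ℝ => s * w s)
      =ᵐ[volume.restrict (Ioc (0:ℝ) b)] fun s => s * (μ (Ioi s)).toReal := by
    refine (ae_restrict_iff' measurableSet_Ioc).2 (Eventually.of_forall fun s hs => ?_)
    show s * w s = s * (μ (Ioi s)).toReal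
    rw [htail s hs.1, ENNReal.toReal_ofReal (hw_nonneg s hs.1)]
  -- the key real identity
  have hkey : ∫ s in Ioc (0:ℝ) b, s * w s = ∫ u, (min b u)^2/2 ∂μ := by
    have hnn1 : 0 ≤ᵐ[volume.restrict (Ioc (0:ℝ) b)] fun s => s * w s := by
      refine (ae_restrict_iff' measurableSet_Ioc).2 (Eventually.of_forall fun s hs => ?_)
      exact mul_nonneg hs.1.le (hw_nonneg s hs.1)
    have hm1 : AEStronglyMeasurable (fun s => s * w s) (volume.restrict (Ioc (0:ℝ) b)) :=
      ((measurable_id.mul htail_meas).aestronglyMeasurable).congr hw_ae.symm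
    have hL : ∫⁻ s in Ioc (0:ℝ) b, ENNReal.ofReal (s * w s)
        = ∫⁻ u, ENNReal.ofReal ((min b u)^2/2) ∂μ := by
      rw [← fubini_key μ hsf hμ_supp b hbpos]
      refine setLIntegral_congr_fun measurableSet_Ioc (fun s hs => ?_)
      rw [ENNReal.ofReal_mul hs.1.le, htail s hs.1]
    have hnn2 : 0 ≤ᵐ[μ] fun u => (min b u)^2/2 :=
      Eventually.of_forall fun u => by positivity
    have hm2 : AEStronglyMeasurable (fun u => (min b u)^2/2) μ :=
      Continuous.aestronglyMeasurable (by fun_prop)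
    rw [integral_eq_lintegral_of_nonneg_ae hnn1 hm1,
      integral_eq_lintegral_of_nonneg_ae hnn2 hm2, hL]
  -- integrability of the kernel functions
  have hintK : Integrable (fun u => (min b u)^2/2) μ := by
    refine key_int _ (b * max b 1) (by positivity) ?_ ?_
    · exact Continuous.aestronglyMeasurable (by fun_prop)
    · refine hae.mono fun u hu => ?_
      have h0 : 0 ≤ min b u := le_min hbpos.le hu.le
      rw [Real.norm_eq_abs, abs_of_nonneg (by positivity)]
      rcases le_total u 1 with h | h
      · rw [min_eq_right h]
        have hmu : min b u * min b u ≤ b * u :=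
          mul_le_mul (min_le_left _ _) (min_le_right _ _) h0 hbpos.le
        have h1b : (1:ℝ) ≤ max b 1 := le_max_right _ _
        nlinarith [mul_nonneg (mul_pos hbpos hu).le (sub_nonneg.2 h1b)]
      · rw [min_eq_left h]
        have hmu : min b u * min b u ≤ b * b :=
          mul_le_mul (min_le_left _ _) (min_le_left _ _) h0 hbpos.le
        have h2b : b * b ≤ b * max b 1 :=
          mul_le_mul_of_nonneg_left (le_max_left b 1) hbpos.le
        nlinarith
  have hintG : Integrable (fun a => 1 - Real.exp (-l*a) - l * (a * Real.exp (-l*a))) μ :=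
    (int1 l hl).sub ((int2 l hl).const_mul l)
  -- pointwise comparison
  have hpt : ∀ a : ℝ, 0 < a →
      l^2 * ((min b a)^2/2) / (2 * Real.exp 1)
        ≤ 1 - Real.exp (-l*a) - l * (a * Real.exp (-l*a)) ∧
      1 - Real.exp (-l*a) - l * (a * Real.exp (-l*a)) ≤ 2 * (l^2 * ((min b a)^2/2)) := by
    intro a ha
    have hx : 0 ≤ l * a := by positivity
    have hgl := aux_g_le (l*a) hx
    have hgg := aux_g_ge (l*a) hx
    have hlb : l * b = 1 := by rw [hb]; field_simp
    have hmin : min (l*a) 1 = l * min b a := by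
      rcases le_total a b with h | h
      · have h2 : l * a ≤ 1 := by
          calc l * a ≤ l * b := mul_le_mul_of_nonneg_left h hl.le
            _ = 1 := hlb
        rw [min_eq_right h, min_eq_left h2]
      · have h2 : (1:ℝ) ≤ l * a := by
          calc (1:ℝ) = l * b := hlb.symm
            _ ≤ l * a := mul_le_mul_of_nonneg_left h hl.le
        rw [min_eq_left h, min_eq_right h2]
        exact hlb.symm
    have hsq : (min (l*a) 1)^2 = l^2 * (min b a)^2 := by rw [hmin]; ring
    have heq : 1 - Real.exp (-l*a) - l * (a * Real.exp (-l*a))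
        = 1 - Real.exp (-(l*a)) - (l*a) * Real.exp (-(l*a)) := by
      rw [neg_mul]; ring
    constructor
    · rw [heq]
      calc l^2 * ((min b a)^2/2) / (2 * Real.exp 1)
          = (min (l*a) 1)^2 / (4 * Real.exp 1) := by rw [hsq]; ring
        _ ≤ _ := hgg
    · rw [heq]
      calc 1 - Real.exp (-(l*a)) - (l*a) * Real.exp (-(l*a))
          ≤ (min (l*a) 1)^2 := hgl
        _ = 2 * (l^2 * ((min b a)^2/2)) := by rw [hsq]; ring
  -- put everything together
  rw [hHeq l hl, hkey]
  constructor
  · have hle : ∀ᵐ a ∂μ, (fun a => l^2 * ((min b a)^2/2) / (2 * Real.exp 1)) a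
        ≤ (fun a => 1 - Real.exp (-l*a) - l * (a * Real.exp (-l*a))) a :=
      hae.mono fun a ha => (hpt a ha).1
    have h := integral_mono_ae
      ((hintK.const_mul (l^2)).div_const (2 * Real.exp 1)) hintG hle
    calc 1/(2 * Real.exp 1) * (l ^ 2 * ∫ u, (min b u)^2/2 ∂μ)
        = (l^2/(2 * Real.exp 1)) * ∫ u, (min b u)^2/2 ∂μ := by ring
      _ = ∫ a, (l^2/(2 * Real.exp 1)) * ((min b a)^2/2) ∂μ := (integral_const_mul _ _).symm
      _ = ∫ a, l^2 * ((min b a)^2/2) / (2 * Real.exp 1) ∂μ :=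
          integral_congr_ae (Eventually.of_forall fun a => by ring)
      _ ≤ _ := h
  · have hle : ∀ᵐ a ∂μ, (fun a => 1 - Real.exp (-l*a) - l * (a * Real.exp (-l*a))) a
        ≤ (fun a => 2 * (l^2 * ((min b a)^2/2))) a :=
      hae.mono fun a ha => (hpt a ha).2
    have h := integral_mono_ae hintG ((hintK.const_mul (l^2)).const_mul 2) hle
    calc ∫ a, (1 - Real.exp (-l*a) - l * (a * Real.exp (-l*a))) ∂μ
        ≤ ∫ a, 2 * (l^2 * ((min b a)^2/2)) ∂μ := h
      _ = 2 * (l ^ 2 * ∫ u, (min b u)^2/2 ∂μ) := by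
          rw [integral_const_mul, integral_const_mul]
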